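/- Let K ⊂ ℝᵈ be a convex body, θ ∈ S^{d−1}, and t ∈ [m_{K,θ}, h_K(θ)]. Then A_{K,θ}(t) ≥ α_θ(t)·ψ_{K,θ}(t), where α_θ(t) = d⁻¹·(h_K(θ) − t). -/

import Mathlib

open MeasureTheory Set intervalIntegral
open scoped RealInnerProductSpace ENNReal

noncomputable section

/-- Euclidean space `ℝᵈ`. -/
abbrev Euc (d : ℕ) := EuclideanSpace ℝ (Fin d)

/-- A convex body: a compact convex set with nonempty interior. -/
def IsConvexBody {d : ℕ} (K : Set (Euc d)) : Prop :=
  IsCompact K ∧ Convex ℝ K ∧ (interior K).Nonempty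

/-- The support function `h_K(θ) = sup_{x ∈ K} ⟨θ, x⟩`. -/
def suppFn {d : ℕ} (K : Set (Euc d)) (θ : Euc d) : ℝ :=
  sSup ((fun x => ⟪θ, x⟫) '' K)

/-- The normalized parallel section function
`ψ_{K,θ}(t) = vol_{d-1}(K ∩ {y : ⟨θ,y⟩ = t}) / vol_d(K)`, where the `(d-1)`-dimensional
volume is Hausdorff measure. -/
def psi {d : ℕ} (K : Set (Euc d)) (θ : Euc d) (t : ℝ) : ℝ :=
  (μH[(d : ℝ) - 1] (K ∩ {y : Euc d | ⟪θ, y⟫ = t})).toReal / (volume K).toReal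

/-- `A_{K,θ}(t) = ∫_t^{h_K(θ)} ψ_{K,θ}(s) ds`. -/
def sectionTail {d : ℕ} (K : Set (Euc d)) (θ : Euc d) (t : ℝ) : ℝ :=
  ∫ s in t..(suppFn K θ), psi K θ s

lemma bounded_hausdorff_ne_top (n : ℕ) {S : Set (EuclideanSpace ℝ (Fin n))}
    (hS : Bornology.IsBounded S) : μH[(n : ℝ)] S ≠ ∞ := by
  obtain ⟨R, hR⟩ := hS.subset_closedBall 0
  set e : EuclideanSpace ℝ (Fin n) ≃L[ℝ] (Fin n → ℝ) := EuclideanSpace.equiv (Fin n) ℝ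
  have hlip : LipschitzWith ‖(e.symm : (Fin n → ℝ) →L[ℝ] EuclideanSpace ℝ (Fin n))‖₊
      (e.symm : (Fin n → ℝ) →L[ℝ] EuclideanSpace ℝ (Fin n)) :=
    ContinuousLinearMap.lipschitz _
  have hSsub : S ⊆ (e.symm : (Fin n → ℝ) →L[ℝ] _) '' (e '' S) := by
    intro x hx
    exact ⟨e x, ⟨x, hx, rfl⟩, by simp⟩
  have h1 : μH[(n : ℝ)] S ≤ (‖(e.symm : (Fin n → ℝ) →L[ℝ] EuclideanSpace ℝ (Fin n))‖₊ : ℝ≥0∞)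
      ^ (n : ℝ) * μH[(n : ℝ)] (e '' S) :=
    le_trans (measure_mono hSsub) (hlip.hausdorffMeasure_image_le (by positivity) _)
  have h2 : e '' S ⊆ Metric.closedBall (0 : Fin n → ℝ) R := by
    rintro _ ⟨x, hx, rfl⟩
    have := hR hx
    simp only [Metric.mem_closedBall, dist_zero_right] at this ⊢
    calc ‖e x‖ ≤ ‖x‖ := by
          rw [pi_norm_le_iff_of_nonneg (norm_nonneg x)]
          intro i
          have hxi : ‖(e x) i‖ = |x i| := rfl
          rw [hxi, EuclideanSpace.norm_eq, ← Real.sqrt_sq_eq_abs]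
          apply Real.sqrt_le_sqrt
          have := Finset.single_le_sum (f := fun j => ‖x j‖ ^ 2)
            (fun j _ => by positivity) (Finset.mem_univ i)
          simpa [Real.norm_eq_abs, sq_abs] using this
      _ ≤ R := this
  have h3 : μH[(n : ℝ)] (e '' S) ≠ ∞ := by
    have : μH[(n : ℝ)] (Metric.closedBall (0 : Fin n → ℝ) R) ≠ ∞ := by
      have hpi : (μH[(n : ℝ)] : Measure (Fin n → ℝ)) = volume := by
        simpa using (hausdorffMeasure_pi_real (ι := Fin n))
      rw [hpi]
      exact (isCompact_closedBall _ _).measure_lt_top.ne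
    exact fun h => this (top_le_iff.1 (h ▸ measure_mono h2))
  intro htop
  rw [htop] at h1
  exact absurd (top_le_iff.1 h1) (ENNReal.mul_ne_top
    (ENNReal.rpow_lt_top_of_nonneg (by positivity) ENNReal.coe_ne_top).ne h3)

lemma slice_hausdorff_ne_top {d : ℕ} (hd : 1 ≤ d) {θ : Euc d} (hθ : ‖θ‖ = 1)
    {S : Set (Euc d)} (hS : Bornology.IsBounded S) {s : ℝ}
    (hsub : S ⊆ {y : Euc d | ⟪θ, y⟫ = s}) : μH[(d : ℝ) - 1] S ≠ ∞ := by
  have hθ0 : θ ≠ 0 := by intro h; rw [h] at hθ; simp at hθ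
  haveI : Fact (Module.finrank ℝ (Euc d) = (d - 1) + 1) :=
    ⟨by rw [_root_.finrank_euclideanSpace_fin]; omega⟩
  set W := (ℝ ∙ θ)ᗮ with hWdef
  have hW : Module.finrank ℝ W = d - 1 := Submodule.finrank_orthogonal_span_singleton hθ0
  set b := (stdOrthonormalBasis ℝ W).repr
  set G : EuclideanSpace ℝ (Fin (Module.finrank ℝ W)) → Euc d :=
    fun v => ((b.symm v : W) : Euc d) + s • θ with hGdef
  have hGiso : Isometry G := by
    have h1 : Isometry ((↑) : W → Euc d) := isometry_subtype_coe
    have h2 : Isometry (fun x : Euc d => x + s • θ) :=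
      (IsometryEquiv.addRight (s • θ)).isometry
    exact (h2.comp h1).comp b.symm.isometry
  have hrange : S ⊆ Set.range G := by
    intro y hy
    have hys : ⟪θ, y⟫ = s := hsub hy
    have hmem : y - s • θ ∈ W := by
      rw [hWdef, Submodule.mem_orthogonal_singleton_iff_inner_right]
      rw [inner_sub_right, real_inner_smul_right, real_inner_self_eq_norm_sq, hθ, hys]
      ring
    refine ⟨b ⟨y - s • θ, hmem⟩, ?_⟩
    rw [hGdef]
    simp
  have himg : G '' (G ⁻¹' S) = S := Set.image_preimage_eq_of_subset hrange
  have hexp : (d : ℝ) - 1 = ((Module.finrank ℝ W : ℕ) : ℝ) := by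
    rw [hW, Nat.cast_sub hd]; simp
  have hbd : Bornology.IsBounded (G ⁻¹' S) := by
    obtain ⟨R, hR⟩ := hS.subset_closedBall (G 0)
    apply Bornology.IsBounded.subset (Metric.isBounded_closedBall (x := (0 : EuclideanSpace ℝ (Fin (Module.finrank ℝ W)))) (r := R))
    intro u hu
    have : dist (G u) (G 0) ≤ R := hR hu
    rw [Metric.mem_closedBall, ← hGiso.dist_eq]
    exact this
  calc μH[(d : ℝ) - 1] S = μH[(d : ℝ) - 1] (G '' (G ⁻¹' S)) := by rw [himg]
    _ = μH[(d : ℝ) - 1] (G ⁻¹' S) :=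
        hGiso.hausdorffMeasure_image (Or.inl (by rw [hexp]; positivity)) _
    _ ≠ ∞ := by rw [hexp]; exact bounded_hausdorff_ne_top _ hbd

lemma psi_nonneg {d : ℕ} (K : Set (Euc d)) (θ : Euc d) (s : ℝ) : 0 ≤ psi K θ s :=
  div_nonneg ENNReal.toReal_nonneg ENNReal.toReal_nonneg

/-- For a convex body `K ⊆ ℝᵈ`, a unit vector `θ`, and `t ∈ [m_{K,θ}, h_K(θ)]` (where `m` is
the median, `A_{K,θ}(m) = 1/2`): `A_{K,θ}(t) ≥ d⁻¹ (h_K(θ) - t) ψ_{K,θ}(t)`. -/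
theorem sectionTail_ge_alpha_mul_psi
    (d : ℕ) (hd : 1 ≤ d) (K : Set (Euc d)) (hK : IsConvexBody K)
    (θ : Euc d) (hθ : ‖θ‖ = 1)
    (m : ℝ) (hm : sectionTail K θ m = 1 / 2)
    (t : ℝ) (ht : t ∈ Set.Icc m (suppFn K θ)) :
    (d : ℝ)⁻¹ * (suppFn K θ - t) * psi K θ t ≤ sectionTail K θ t := by
  obtain ⟨hmt, hth⟩ := ht
  set b := suppFn K θ with hb
  rcases eq_or_lt_of_le hth with hteq | htlt
  · rw [sectionTail, ← hb, ← hteq, integral_same]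
    simp
  rcases eq_or_lt_of_le (psi_nonneg K θ t) with hψ0 | hψpos
  · rw [← hψ0, mul_zero]
    exact intervalIntegral.integral_nonneg hth (fun s _ => psi_nonneg K θ s)
  have hdpos : (0:ℝ) < d := by exact_mod_cast hd
  have hhtpos : 0 < b - t := by linarith
  have hvolpos : 0 < (volume K).toReal := by
    by_contra hc
    push_neg at hc
    have h0 : (volume K).toReal = 0 := le_antisymm hc ENNReal.toReal_nonneg
    rw [psi, h0, div_zero] at hψpos
    exact lt_irrefl 0 hψpos
  have hμtpos : 0 < (μH[(d : ℝ) - 1] (K ∩ {y : Euc d | ⟪θ, y⟫ = t})).toReal := by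
    by_contra hc
    push_neg at hc
    have h0 : (μH[(d : ℝ) - 1] (K ∩ {y : Euc d | ⟪θ, y⟫ = t})).toReal = 0 :=
      le_antisymm hc ENNReal.toReal_nonneg
    rw [psi, h0, zero_div] at hψpos
    exact lt_irrefl 0 hψpos
  -- maximizer
  have hKne : K.Nonempty := ⟨hK.2.2.choose, interior_subset hK.2.2.choose_spec⟩
  have hcont : ContinuousOn (fun x : Euc d => ⟪θ, x⟫) K :=
    (continuous_const.inner continuous_id).continuousOn
  obtain ⟨x₀, hx₀K, hx₀⟩ := hK.1.exists_sSup_image_eq hKne hcont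
  have hx₀b : ⟪θ, x₀⟫ = b := hx₀.symm
  -- integrability
  have hIntm : IntervalIntegrable (psi K θ) volume m b := by
    by_contra hni
    rw [sectionTail, ← hb, intervalIntegral.integral_undef hni] at hm
    norm_num at hm
  have hInt : IntervalIntegrable (psi K θ) volume t b :=
    hIntm.mono_set (by
      rw [Set.uIcc_of_le hth, Set.uIcc_of_le (le_trans hmt hth)]
      exact Set.Icc_subset_Icc hmt le_rfl)
  set n := d - 1 with hn
  have hnd : n + 1 = d := by omega
  have hexp : ((d:ℝ) - 1) = (n : ℝ) := by rw [hn, Nat.cast_sub hd]; simp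
  -- pointwise bound
  have key : ∀ s ∈ Icc t b, s ≠ b →
      psi K θ t * ((b - s) / (b - t)) ^ n ≤ psi K θ s := by
    intro s hs hsne
    have hsb : s < b := lt_of_le_of_ne hs.2 hsne
    set c := (b - s) / (b - t) with hc
    have hc0 : 0 < c := div_pos (by linarith) hhtpos
    have hc1 : c ≤ 1 := by rw [div_le_one hhtpos]; linarith [hs.1]
    have hform : ∀ z : Euc d, AffineMap.homothety x₀ c z = c • z + (1 - c) • x₀ := by
      intro z
      simp only [AffineMap.homothety_apply, vsub_eq_sub, vadd_eq_add, smul_sub, sub_smul, one_smul]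
      abel
    have himg : AffineMap.homothety x₀ c '' (K ∩ {y : Euc d | ⟪θ, y⟫ = t})
        ⊆ K ∩ {y : Euc d | ⟪θ, y⟫ = s} := by
      rintro _ ⟨z, ⟨hzK, hzp⟩, rfl⟩
      simp only [mem_setOf_eq] at hzp
      constructor
      · rw [hform]
        exact hK.2.1 hzK hx₀K (le_of_lt hc0) (by linarith) (by ring)
      · show ⟪θ, AffineMap.homothety x₀ c z⟫ = s
        rw [hform, inner_add_right, real_inner_smul_right, real_inner_smul_right, hzp, hx₀b]
        have hcb : c * (b - t) = b - s := div_mul_cancel₀ _ (ne_of_gt hhtpos)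
        nlinarith [hcb]
    have hmeas := hausdorffMeasure_homothety_image (𝕜 := ℝ) (d := (d:ℝ) - 1)
        (by rw [hexp]; positivity) x₀ (ne_of_gt hc0) (K ∩ {y : Euc d | ⟪θ, y⟫ = t})
    have hle : (‖c‖₊ : ℝ≥0∞) ^ ((d:ℝ)-1) * μH[(d:ℝ)-1] (K ∩ {y : Euc d | ⟪θ, y⟫ = t})
        ≤ μH[(d:ℝ)-1] (K ∩ {y : Euc d | ⟪θ, y⟫ = s}) := by
      refine le_trans (le_of_eq ?_) (le_trans (le_of_eq hmeas.symm) (measure_mono himg))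
      rw [ENNReal.smul_def, smul_eq_mul, ENNReal.coe_rpow_of_nonneg _ (by rw [hexp]; positivity)]
    have hfin_s : μH[(d:ℝ)-1] (K ∩ {y : Euc d | ⟪θ, y⟫ = s}) ≠ ∞ :=
      slice_hausdorff_ne_top hd hθ (hK.1.isBounded.subset inter_subset_left) inter_subset_right
    have htr := ENNReal.toReal_mono hfin_s hle
    have hμt_ne_top : μH[(d:ℝ)-1] (K ∩ {y : Euc d | ⟪θ, y⟫ = t}) ≠ ∞ := by
      intro htop
      rw [htop] at hμtpos
      simp at hμtpos
    rw [ENNReal.toReal_mul] at htr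
    have hpow : ((‖c‖₊ : ℝ≥0∞) ^ ((d:ℝ)-1)).toReal = c ^ n := by
      rw [← ENNReal.toReal_rpow, ENNReal.coe_toReal, coe_nnnorm, Real.norm_eq_abs,
        abs_of_pos hc0, hexp, Real.rpow_natCast]
    rw [hpow] at htr
    have : psi K θ t * c ^ n ≤ psi K θ s := by
      rw [psi, psi, div_mul_eq_mul_div, mul_comm]
      exact div_le_div_of_nonneg_right htr hvolpos.le |>.trans_eq rfl
    exact this
  -- integral comparison
  have hgcont : Continuous (fun s : ℝ => psi K θ t * ((b - s)/(b - t)) ^ n) := by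
    fun_prop
  have hgint : IntervalIntegrable (fun s : ℝ => psi K θ t * ((b - s)/(b - t)) ^ n)
      volume t b := hgcont.intervalIntegrable t b
  have hae : (fun s : ℝ => psi K θ t * ((b - s)/(b - t)) ^ n)
      ≤ᵐ[volume.restrict (Icc t b)] psi K θ := by
    have h1 : ∀ᵐ s ∂(volume.restrict (Icc t b)), s ∈ Icc t b :=
      ae_restrict_mem measurableSet_Icc
    have h2 : ∀ᵐ s ∂(volume.restrict (Icc t b)), s ≠ b := by
      apply ae_restrict_of_ae
      rw [ae_iff]
      have : {a : ℝ | ¬ a ≠ b} = {b} := by ext a; simp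
      rw [this]
      exact Real.volume_singleton
    filter_upwards [h1, h2] with s hs hsne using key s hs hsne
  have hmono := intervalIntegral.integral_mono_ae_restrict hth hgint hInt hae
  have hcalc : ∫ s in t..b, psi K θ t * ((b - s)/(b - t)) ^ n
      = psi K θ t * ((b - t)/d) := by
    rw [intervalIntegral.integral_const_mul]
    congr 1
    simp_rw [div_pow]
    rw [intervalIntegral.integral_div]
    rw [intervalIntegral.integral_comp_sub_left (fun u : ℝ => u ^ n) b]
    rw [sub_self, integral_pow]
    have hne : (b - t) ^ n ≠ 0 := pow_ne_zero _ (ne_of_gt hhtpos)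
    have hcast : ((n : ℝ) + 1) = (d : ℝ) := by exact_mod_cast congrArg (Nat.cast (R := ℝ)) hnd
    rw [zero_pow (by omega), pow_succ]
    field_simp
    rw [hcast]
    ring
  rw [sectionTail, ← hb]
  calc (d : ℝ)⁻¹ * (b - t) * psi K θ t
      = psi K θ t * ((b - t)/d) := by ring
    _ = ∫ s in t..b, psi K θ t * ((b - s)/(b - t)) ^ n := hcalc.symm
    _ ≤ ∫ s in t..b, psi K θ s := hmono
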